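/- Let F be an F_q-subspace of L = F_{q^m} with dim_{F_q} F = 2 and 1 ∈ F. Let W be an L-subspace of L^{n+t} of L-dimension n+t−k that admits a basis consisting of t vectors all of whose coordinates lie in F_q together with n−k vectors all of whose coordinates lie in F. Then there exist a matrix H′ ∈ L^{(n+t−k)×(n+t)} whose rows form a basis of W, an invertible (n+t)×(n+t) matrix P with entries in F_q, and an invertible (n+t−k)×(n+t−k) matrix S over L, such that S·H′·P is the block-diagonal matrix [[I_t, 0],[0, R]], where R is an (n−k)×n matrix over L all of whose entries lie in an F_q-subspace of L of dimension at most 2. -/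

import Mathlib

open Matrix

theorem sumExtend_inl' {K V ι : Type*} [Field K] [AddCommGroup V] [Module K V] {v : ι → V}
    (hs : LinearIndependent K v) (i : ι) : Module.Basis.sumExtend hs (Sum.inl i) = v i := by
  classical
  simp only [Module.Basis.sumExtend, Module.Basis.reindex_apply, Equiv.symm_symm, Equiv.trans_apply,
    Module.Basis.extend_apply_self]
  rfl

/-- Extend a linearly independent `Fin t`-family to a basis indexed by `Fin t ⊕ Fin n`. -/
theorem extendFinBasis {K V : Type*} [Field K] [AddCommGroup V] [Module K V]
    [FiniteDimensional K V] {t n : ℕ} (hrank : Module.finrank K V = t + n)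
    (v : Fin t → V) (hv : LinearIndependent K v) :
    ∃ b : Module.Basis (Fin t ⊕ Fin n) K V, ∀ i, b (Sum.inl i) = v i := by
  classical
  let b0 := Module.Basis.sumExtend hv
  haveI hbig : Fintype (Fin t ⊕ ↑(Module.Basis.sumExtendIndex hv)) :=
    FiniteDimensional.fintypeBasisIndex (K := K) (V := V) b0
  haveI : Fintype (Module.Basis.sumExtendIndex hv) := Fintype.ofInjective (Sum.inr : _ → Fin t ⊕ ↑(Module.Basis.sumExtendIndex hv)) Sum.inr_injective
  have hcard : Fintype.card (Module.Basis.sumExtendIndex hv) = n := by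
    have h1 := Module.finrank_eq_card_basis b0
    rw [hrank] at h1
    rw [Subsingleton.elim hbig (instFintypeSum (Fin t) _)] at h1
    rw [Fintype.card_sum, Fintype.card_fin] at h1
    omega
  let e2 : Module.Basis.sumExtendIndex hv ≃ Fin n := Fintype.equivFinOfCardEq hcard
  refine ⟨b0.reindex ((Equiv.refl (Fin t)).sumCongr e2), fun i => ?_⟩
  rw [Module.Basis.reindex_apply]
  have h2 : ((Equiv.refl (Fin t)).sumCongr e2).symm (Sum.inl i) = Sum.inl i := rfl
  rw [h2, sumExtend_inl']

theorem stmt_6 {Fq L : Type*} [Field Fq] [Fintype Fq] [Field L] [Algebra Fq L]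
    [FiniteDimensional Fq L]
    (n k t : ℕ) (hkn : k ≤ n)
    (F : Submodule Fq L) (hF2 : Module.finrank Fq ↥F = 2) (h1F : (1 : L) ∈ F)
    (W : Submodule L (Fin (n + t) → L))
    (hWdim : Module.finrank L ↥W = n + t - k)
    (hbasis : ∃ (u : Fin t → (Fin (n + t) → L)) (v : Fin (n - k) → (Fin (n + t) → L)),
      (∀ i j, u i j ∈ (1 : Submodule Fq L)) ∧ (∀ i j, v i j ∈ F) ∧
      LinearIndependent L (Sum.elim u v) ∧
      Submodule.span L (Set.range (Sum.elim u v)) = W) :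
    ∃ (H' : Matrix (Fin (n + t - k)) (Fin (n + t)) L)
      (P : Matrix (Fin (n + t)) (Fin (n + t)) Fq)
      (S : Matrix (Fin (n + t - k)) (Fin (n + t - k)) L)
      (R : Matrix (Fin (n - k)) (Fin n) L)
      (G : Submodule Fq L),
      LinearIndependent L (fun i => H' i) ∧
      Submodule.span L (Set.range fun i => H' i) = (W : Submodule L (Fin (n + t) → L)) ∧
      IsUnit P ∧ IsUnit S ∧
      Module.finrank Fq ↥G ≤ 2 ∧ (∀ i j, R i j ∈ G) ∧
      S * H' * P.map (algebraMap Fq L) =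
        (Matrix.fromBlocks (1 : Matrix (Fin t) (Fin t) L) 0 0 R).submatrix
          (fun i => finSumFinEquiv.symm (finCongr (by omega : n + t - k = t + (n - k)) i))
          (fun j => finSumFinEquiv.symm (finCongr (by omega : n + t = t + n) j)) := by
  classical
  obtain ⟨u, v, hu1, hvF, hli, hspan⟩ := hbasis
  -- preimages of the u-rows in Fq
  choose ub hub using fun i j => (Submodule.mem_one).mp (hu1 i j)
  -- reindexing equivalences for rows and columns
  set eC : Fin (n + t) ≃ Fin t ⊕ Fin n :=
    (finCongr (by omega : n + t = t + n)).trans finSumFinEquiv.symm with heC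
  set eR : Fin (n + t - k) ≃ Fin t ⊕ Fin (n - k) :=
    (finCongr (by omega : n + t - k = t + (n - k))).trans finSumFinEquiv.symm with heR
  -- u is linearly independent over L
  have hliu : LinearIndependent L u := by
    have h := hli.comp Sum.inl Sum.inl_injective
    rwa [Sum.elim_comp_inl] at h
  -- ub is linearly independent over Fq
  have hliub : LinearIndependent Fq ub := by
    rw [Fintype.linearIndependent_iff]
    intro g hg
    have h0 : ∑ i, (algebraMap Fq L (g i)) • u i = 0 := by
      funext j
      have h1 := congrFun hg j
      simp only [Finset.sum_apply, Pi.smul_apply, Pi.zero_apply, smul_eq_mul] at h1 ⊢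
      calc ∑ i, algebraMap Fq L (g i) * u i j
          = algebraMap Fq L (∑ i, g i * ub i j) := by
            rw [map_sum]
            exact Finset.sum_congr rfl fun i _ => by rw [_root_.map_mul, hub]
        _ = 0 := by rw [h1, map_zero]
    intro i
    exact (algebraMap Fq L).injective
      (by rw [Fintype.linearIndependent_iff.mp hliu _ h0 i, map_zero])
  have hfr : Module.finrank Fq (Fin (n + t) → Fq) = t + n := by
    rw [Module.finrank_fin_fun]; omega
  obtain ⟨b, hb⟩ := extendFinBasis hfr ub hliub
  -- the Fq-matrix whose rows are the extended basis
  set B : Matrix (Fin (n + t)) (Fin (n + t)) Fq := Matrix.of fun a => b (eC a) with hBdef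
  have hBrow : ∀ i : Fin t, B (eC.symm (Sum.inl i)) = ub i := by
    intro i
    show b (eC (eC.symm (Sum.inl i))) = ub i
    rw [Equiv.apply_symm_apply, hb]
  have hBunit : IsUnit B := by
    have h1 : B = ((Pi.basisFun Fq (Fin (n + t))).toMatrix ⇑(b.reindex eC.symm))ᵀ := by
      ext a l
      simp [hBdef, Module.Basis.toMatrix_apply, Module.Basis.reindex_apply]
    have h2 := (Pi.basisFun Fq (Fin (n + t))).invertibleToMatrix (b.reindex eC.symm)
    rw [Matrix.isUnit_iff_isUnit_det, h1, Matrix.det_transpose, ← Matrix.isUnit_iff_isUnit_det]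
    exact isUnit_of_invertible _
  have hBdet : IsUnit B.det := (Matrix.isUnit_iff_isUnit_det B).mp hBunit
  set P := B⁻¹ with hPdef
  have hPunit : IsUnit P := (Matrix.isUnit_iff_isUnit_det P).mpr (B.isUnit_nonsing_inv_det hBdet)
  have hBP : B * P = 1 := Matrix.mul_nonsing_inv B hBdet
  set Pm := P.map (algebraMap Fq L) with hPm
  set H' : Matrix (Fin (n + t - k)) (Fin (n + t)) L :=
    Matrix.of fun r => Sum.elim u v (eR r) with hH
  set M := H' * Pm with hMdef
  -- the top rows of M are standard basis vectors
  have hM1 : ∀ (i : Fin t) (c : Fin (n + t)),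
      M (eR.symm (Sum.inl i)) c = if eC.symm (Sum.inl i) = c then 1 else 0 := by
    intro i c
    have h1 : M (eR.symm (Sum.inl i)) c = ∑ l, u i l * algebraMap Fq L (P l c) := by
      simp [hMdef, Matrix.mul_apply, hH, hPm, Equiv.apply_symm_apply]
    have h2 : ∑ l, u i l * algebraMap Fq L (P l c)
        = algebraMap Fq L ((B * P) (eC.symm (Sum.inl i)) c) := by
      rw [Matrix.mul_apply, map_sum]
      refine Finset.sum_congr rfl fun l _ => ?_
      rw [_root_.map_mul, hBrow, hub]
    rw [h1, h2, hBP, Matrix.one_apply, apply_ite (algebraMap Fq L), _root_.map_one, _root_.map_zero]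
  -- the bottom rows of M have entries in F
  have hM2 : ∀ (a : Fin (n - k)) (c : Fin (n + t)), M (eR.symm (Sum.inr a)) c ∈ F := by
    intro a c
    have h1 : M (eR.symm (Sum.inr a)) c = ∑ l, v a l * algebraMap Fq L (P l c) := by
      simp [hMdef, Matrix.mul_apply, hH, hPm, Equiv.apply_symm_apply]
    rw [h1]
    refine Submodule.sum_mem F fun l _ => ?_
    have h2 := Submodule.smul_mem F (P l c) (hvF a l)
    rwa [Algebra.smul_def, mul_comm] at h2
  set X : Matrix (Fin (n - k)) (Fin t) L :=
    Matrix.of fun a i => M (eR.symm (Sum.inr a)) (eC.symm (Sum.inl i)) with hX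
  set R : Matrix (Fin (n - k)) (Fin n) L :=
    Matrix.of fun a j => M (eR.symm (Sum.inr a)) (eC.symm (Sum.inr j)) with hR
  set S : Matrix (Fin (n + t - k)) (Fin (n + t - k)) L :=
    (Matrix.fromBlocks 1 0 (-X) 1).submatrix eR eR with hS
  have hSunit : IsUnit S := by
    rw [Matrix.isUnit_iff_isUnit_det, hS, Matrix.det_submatrix_equiv_self,
      Matrix.det_fromBlocks_zero₁₂]
    simp
  refine ⟨H', P, S, R, F, ?_, ?_, hPunit, hSunit, le_of_eq hF2, fun a j => ?_, ?_⟩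
  · show LinearIndependent L (Sum.elim u v ∘ ⇑eR)
    exact hli.comp eR eR.injective
  · have h1 : (Set.range fun i => H' i) = Set.range (Sum.elim u v) := by
      show Set.range (Sum.elim u v ∘ ⇑eR) = _
      exact Function.Surjective.range_comp eR.surjective _
    rw [h1, hspan]
  · exact hM2 a (eC.symm (Sum.inr j))
  · -- the matrix identity
    have hgoal : (Matrix.fromBlocks (1 : Matrix (Fin t) (Fin t) L) 0 0 R).submatrix
        (fun i => finSumFinEquiv.symm (finCongr (by omega : n + t - k = t + (n - k)) i))
        (fun j => finSumFinEquiv.symm (finCongr (by omega : n + t = t + n) j))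
        = (Matrix.fromBlocks 1 0 0 R).submatrix ⇑eR ⇑eC := rfl
    rw [hgoal, Matrix.mul_assoc, ← hMdef]
    ext r c
    obtain ⟨s, rfl⟩ : ∃ s, r = eR.symm s := ⟨eR r, (eR.symm_apply_apply r).symm⟩
    obtain ⟨d, rfl⟩ : ∃ d, c = eC.symm d := ⟨eC c, (eC.symm_apply_apply c).symm⟩
    rw [Matrix.submatrix_apply, Equiv.apply_symm_apply, Equiv.apply_symm_apply,
      Matrix.mul_apply, ← Equiv.sum_comp eR.symm
        (fun r' => S (eR.symm s) r' * M r' (eC.symm d)), Fintype.sum_sum_type]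
    simp only [hS, Matrix.submatrix_apply, Equiv.apply_symm_apply]
    cases s with
    | inl i =>
      simp only [Matrix.fromBlocks_apply₁₁, Matrix.fromBlocks_apply₁₂, Matrix.zero_apply,
        zero_mul, Finset.sum_const_zero, add_zero, Matrix.one_apply, ite_mul, one_mul,
        Finset.sum_ite_eq, Finset.mem_univ, if_true]
      rw [hM1]
      cases d with
      | inl i0 =>
        simp [Matrix.fromBlocks_apply₁₁, Matrix.one_apply, Equiv.apply_eq_iff_eq]
      | inr j =>
        simp [Matrix.fromBlocks_apply₁₂, Equiv.apply_eq_iff_eq]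
    | inr a =>
      simp only [Matrix.fromBlocks_apply₂₁, Matrix.fromBlocks_apply₂₂, Matrix.neg_apply,
        Matrix.one_apply, ite_mul, one_mul, zero_mul, Finset.sum_ite_eq, Finset.mem_univ,
        if_true, hM1, mul_ite, mul_one, mul_zero]
      cases d with
      | inl i0 =>
        simp only [Equiv.apply_eq_iff_eq, Sum.inl.injEq, Matrix.fromBlocks_apply₂₁,
          Matrix.zero_apply]
        rw [Finset.sum_ite_eq' Finset.univ i0 (fun i' => -X a i')]
        simp [hX]
      | inr j =>
        have hfalse : ∀ i' : Fin t, (eC.symm (Sum.inl i') = eC.symm (Sum.inr j)) = False := by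
          intro i'
          simp [Equiv.apply_eq_iff_eq]
        simp only [hfalse, if_false, Finset.sum_const_zero, zero_add,
          Matrix.fromBlocks_apply₂₂, hR]
        rfl
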